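/- Let N be the directed 4-cycle network with vertices A, B, C, O, edges A → B, B → C, C → O, O → A each of capacity 1, and all four vertices boundary vertices. Then S({A}) = S({B}) = S({C}) = S({A,B}) = S({A,C}) = S({B,C}) = S({A,B,C}) = 1, and consequently the monogamy of mutual information fails for this network: S({A,B}) + S({A,C}) + S({B,C}) < S({A}) + S({B}) + S({C}) + S({A,B,C}). -/

import Mathlib

open scoped Classical

/-- An edge cycle: a nonempty cyclically ordered sequence of distinct directed
edges (each a source-target pair) with the target of each edge equal to the
source of the next (cyclically). -/
structure EdgeCycle (V : Type*) where
  n : ℕ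
  npos : 0 < n
  edge : Fin n → V × V
  inj : Function.Injective edge
  chain : ∀ i : Fin n, (edge i).2 = (edge ⟨(i.val + 1) % n, Nat.mod_lt _ npos⟩).1

/-- Membership of a directed edge in an edge cycle. -/
def EdgeCycle.Mem {V : Type*} (C : EdgeCycle V) (e : V × V) : Prop :=
  ∃ i, C.edge i = e

/-- The cycle visits a vertex of `S`: some edge of the cycle has its target in `S`. -/
def EdgeCycle.Visits {V : Type*} (C : EdgeCycle V) (S : Finset V) : Prop :=
  ∃ i, (C.edge i).2 ∈ S

/-- A simple cycle flow: an edge cycle together with a nonnegative flux. -/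
structure CycleFlow (V : Type*) where
  cyc : EdgeCycle V
  flux : ℝ
  flux_nonneg : 0 ≤ flux

/-- The total load that a finite family of simple cycle flows places on the
directed edge `(u, v)`. -/
noncomputable def edgeLoad {V : Type*} (F : List (CycleFlow V)) (u v : V) : ℝ :=
  (F.map (fun C => if C.cyc.Mem (u, v) then C.flux else 0)).sum

/-- A finite family of simple cycle flows is a multi-cycle flow on the network
with capacity function `c` if on every edge the total load is at most the capacity. -/
def Feasible {V : Type*} (c : V → V → ℝ) (F : List (CycleFlow V)) : Prop :=
  ∀ u v, edgeLoad F u v ≤ c u v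

/-- The flux of a multi-cycle flow between two (disjoint) vertex sets `I` and `J`:
the sum of the fluxes of those simple cycle flows visiting both a vertex of `I`
and a vertex of `J`. -/
noncomputable def mflux {V : Type*} (F : List (CycleFlow V)) (I J : Finset V) : ℝ :=
  (F.map (fun C => if C.cyc.Visits I ∧ C.cyc.Visits J then C.flux else 0)).sum

/-- The cycle-flow entropy of a subset `I` of the boundary vertices `bdry`:
the maximal flux between `I` and its boundary complement over all
multi-cycle flows. -/
noncomputable def entropy {V : Type*} (c : V → V → ℝ) (bdry I : Finset V) : ℝ :=
  sSup { x | ∃ F : List (CycleFlow V), Feasible c F ∧ mflux F I (bdry \ I) = x }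

/-- A network is balanced if at every vertex the total capacity of ingoing edges
equals the total capacity of outgoing edges. -/
def BalancedNet {V : Type*} [Fintype V] (c : V → V → ℝ) : Prop :=
  ∀ v : V, (∑ u, c u v) = ∑ u, c v u

/-- The residual capacity function of a network `c` with respect to a
multi-cycle flow `F`. -/
noncomputable def resid {V : Type*} (c : V → V → ℝ) (F : List (CycleFlow V)) : V → V → ℝ :=
  fun u v => c u v - edgeLoad F u v

/-- `F'` is a multi-cycle subflow of `F`: same edge cycles, smaller fluxes. -/
def Subflow {V : Type*} (F' F : List (CycleFlow V)) : Prop :=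
  List.Forall₂ (fun C' C => C'.cyc = C.cyc ∧ C'.flux ≤ C.flux) F' F

/-- The nesting property: for every pair of disjoint boundary subsets `I`, `J`
there is a single multi-cycle flow simultaneously maximizing the flux through
`I` and through `I ∪ J`. -/
def Nesting {V : Type*} (c : V → V → ℝ) (bdry : Finset V) : Prop :=
  ∀ I J : Finset V, I ⊆ bdry → J ⊆ bdry → Disjoint I J →
    ∃ F : List (CycleFlow V), Feasible c F ∧
      mflux F I (bdry \ I) = entropy c bdry I ∧
      mflux F (I ∪ J) (bdry \ (I ∪ J)) = entropy c bdry (I ∪ J)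

/-- The directed `n`-cycle network: an edge `i → i + 1 (mod n)` of capacity `1`
for each vertex `i`.  For `n = 4` this is the network with vertices
`A = 0, B = 1, C = 2, O = 3` and edges `A → B, B → C, C → O, O → A` of capacity 1. -/
noncomputable def cycleCap (n : ℕ) : Fin n → Fin n → ℝ :=
  fun i j => if j.val = (i.val + 1) % n then 1 else 0

open Fin.NatCast in
/-- On the directed 4-cycle (GHZ) network all seven subsystem entropies equal `1`,
and monogamy of mutual information fails. -/
lemma keyMem (C : EdgeCycle (Fin 4)) (h : ∀ i, (C.edge i).2 = (C.edge i).1 + 1) :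
    C.Mem (0, 1) := by
  set s : Fin C.n → Fin 4 := fun i => (C.edge i).1 with hs
  have hedge : ∀ i, C.edge i = (s i, s i + 1) := fun i => Prod.ext rfl (h i)
  have sinj : Function.Injective s := by
    intro i j hij
    apply C.inj
    rw [hedge i, hedge j, hij]
  have hcard : C.n ≤ 4 := by
    have := Fintype.card_le_of_injective s sinj
    simpa using this
  have hstep : ∀ k : ℕ, s ⟨k % C.n, Nat.mod_lt _ C.npos⟩ = s ⟨0, C.npos⟩ + (k : Fin 4) := by
    intro k
    induction k with
    | zero => simp
    | succ k ih =>
      have h1 : ((k + 1) % C.n) = (k % C.n + 1) % C.n := (Nat.mod_add_mod k C.n 1).symm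
      have h2 := C.chain ⟨k % C.n, Nat.mod_lt _ C.npos⟩
      have h3 := h ⟨k % C.n, Nat.mod_lt _ C.npos⟩
      have hidx : (⟨((⟨k % C.n, Nat.mod_lt _ C.npos⟩ : Fin C.n).val + 1) % C.n,
            Nat.mod_lt _ C.npos⟩ : Fin C.n)
          = ⟨(k + 1) % C.n, Nat.mod_lt _ C.npos⟩ := Fin.ext h1.symm
      rw [hidx] at h2
      have : s ⟨(k + 1) % C.n, Nat.mod_lt _ C.npos⟩
          = s ⟨k % C.n, Nat.mod_lt _ C.npos⟩ + 1 := by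
        show (C.edge ⟨(k + 1) % C.n, Nat.mod_lt _ C.npos⟩).1 = _
        rw [← h2, h3]
      rw [this, ih]
      push_cast
      exact add_assoc _ _ _
  have hn0 : (C.n : Fin 4) = 0 := by
    have := hstep C.n
    have he : (⟨C.n % C.n, Nat.mod_lt _ C.npos⟩ : Fin C.n) = ⟨0, C.npos⟩ :=
      Fin.ext (Nat.mod_self _)
    rw [he] at this
    exact (left_eq_add.mp this)
  have hn4 : C.n = 4 := by
    have hp := C.npos
    have hm : C.n % 4 = 0 := by
      have := congrArg Fin.val hn0
      simpa [Fin.val_natCast] using this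
    omega
  have hbij : Function.Bijective s := by
    rw [Fintype.bijective_iff_injective_and_card]
    exact ⟨sinj, by simp [hn4]⟩
  obtain ⟨i, hi⟩ := hbij.2 0
  exact ⟨i, by rw [hedge i, hi]; rfl⟩

-- flux positive => every edge of the cycle is a network edge
lemma mem_target {F : List (CycleFlow (Fin 4))} (hF : Feasible (cycleCap 4) F)
    {C : CycleFlow (Fin 4)} (hC : C ∈ F) (hpos : 0 < C.flux)
    {u v : Fin 4} (hm : C.cyc.Mem (u, v)) : v = u + 1 := by
  have hload : C.flux ≤ edgeLoad F u v := by
    apply List.single_le_sum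
    · intro x hx
      simp only [List.mem_map] at hx
      obtain ⟨D, _, rfl⟩ := hx
      split_ifs
      · exact D.flux_nonneg
      · exact le_rfl
    · refine List.mem_map.mpr ⟨C, hC, ?_⟩
      exact if_pos hm
  have hcap : 0 < cycleCap 4 u v := lt_of_lt_of_le hpos (hload.trans (hF u v))
  by_contra hne
  have hval : v.val ≠ (u.val + 1) % 4 := by
    intro hval
    exact hne (Fin.ext (by simpa [Fin.add_def] using hval))
  rw [cycleCap, if_neg hval] at hcap
  exact lt_irrefl 0 hcap

lemma upper {F : List (CycleFlow (Fin 4))} (hF : Feasible (cycleCap 4) F)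
    (I J : Finset (Fin 4)) : mflux F I J ≤ 1 := by
  have h1 : mflux F I J ≤ edgeLoad F 0 1 := by
    apply List.sum_le_sum
    intro C hC
    rcases eq_or_lt_of_le C.flux_nonneg with h0 | hpos
    · split_ifs <;> simp [← h0]
    · have hmem : C.cyc.Mem (0, 1) := by
        apply keyMem
        intro i
        exact mem_target hF hC hpos ⟨i, rfl⟩
      rw [if_pos hmem]
      split_ifs
      · exact le_rfl
      · exact C.flux_nonneg
  have h2 : edgeLoad F 0 1 ≤ cycleCap 4 0 1 := hF 0 1
  have h3 : cycleCap 4 0 1 = 1 := by norm_num [cycleCap]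
  linarith

-- the full 4-cycle
def C4 : EdgeCycle (Fin 4) where
  n := 4
  npos := by norm_num
  edge := fun i => (i, i + 1)
  inj := fun i j h => congrArg Prod.fst h
  chain := by decide

lemma C4mem : ∀ u v : Fin 4, C4.Mem (u, v) ↔ v = u + 1 := by
  intro u v
  constructor
  · rintro ⟨i, hi⟩
    injection hi with h1 h2
    rw [← h2, ← h1]
  · rintro rfl
    exact ⟨u, rfl⟩

lemma C4target : ∀ v : Fin 4, ∃ i, (C4.edge i).2 = v := by
  intro v
  refine ⟨(⟨(v.val + 3) % 4, Nat.mod_lt _ (by norm_num)⟩ : Fin 4), ?_⟩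
  show (⟨(v.val + 3) % 4, Nat.mod_lt _ (by norm_num)⟩ : Fin 4) + 1 = v
  apply Fin.ext
  simp only [Fin.add_def, Fin.val_one]
  have := v.isLt
  omega

lemma C4visits {S : Finset (Fin 4)} {v : Fin 4} (hv : v ∈ S) : C4.Visits S := by
  obtain ⟨i, hi⟩ := C4target v
  exact ⟨i, hi ▸ hv⟩

noncomputable def F1 : List (CycleFlow (Fin 4)) := [⟨C4, 1, zero_le_one⟩]

lemma F1feas : Feasible (cycleCap 4) F1 := by
  intro u v
  by_cases hm : C4.Mem (u, v)
  · have hv := (C4mem u v).mp hm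
    have hval : v.val = (u.val + 1) % 4 := by rw [hv, Fin.add_def]; rfl
    simp [edgeLoad, F1, hm, cycleCap, hval]
  · simp only [edgeLoad, F1, List.map_cons, List.map_nil, List.sum_cons, List.sum_nil,
      if_neg hm, add_zero, cycleCap]
    split_ifs <;> norm_num

lemma F1flux {I J : Finset (Fin 4)} {v w : Fin 4} (hI : v ∈ I) (hJ : w ∈ J) :
    mflux F1 I J = 1 := by
  simp [mflux, F1, C4visits hI, C4visits hJ]

lemma sSup_eq_one (I J : Finset (Fin 4)) {v w : Fin 4} (hI : v ∈ I) (hJ : w ∈ J) :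
    sSup { x | ∃ F : List (CycleFlow (Fin 4)),
      Feasible (cycleCap 4) F ∧ mflux F I J = x } = 1 := by
  have hmem : (1 : ℝ) ∈ { x | ∃ F : List (CycleFlow (Fin 4)),
      Feasible (cycleCap 4) F ∧ mflux F I J = x } :=
    ⟨F1, F1feas, F1flux hI hJ⟩
  have hub : ∀ x ∈ { x | ∃ F : List (CycleFlow (Fin 4)),
      Feasible (cycleCap 4) F ∧ mflux F I J = x }, x ≤ 1 := by
    rintro x ⟨F, hF, rfl⟩
    exact upper hF _ _
  exact le_antisymm (csSup_le ⟨1, hmem⟩ hub) (le_csSup ⟨1, hub⟩ hmem)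

lemma entropy_eq_one (I : Finset (Fin 4)) (v : Fin 4) (hv : v ∈ I) (h3 : (3 : Fin 4) ∉ I) :
    entropy (cycleCap 4) Finset.univ I = 1 := by
  unfold entropy
  refine sSup_eq_one (w := 3) I _ hv ?_
  simp [h3]

theorem stmt13 :
    entropy (cycleCap 4) Finset.univ ({0} : Finset (Fin 4)) = 1 ∧
    entropy (cycleCap 4) Finset.univ ({1} : Finset (Fin 4)) = 1 ∧
    entropy (cycleCap 4) Finset.univ ({2} : Finset (Fin 4)) = 1 ∧
    entropy (cycleCap 4) Finset.univ ({0, 1} : Finset (Fin 4)) = 1 ∧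
    entropy (cycleCap 4) Finset.univ ({0, 2} : Finset (Fin 4)) = 1 ∧
    entropy (cycleCap 4) Finset.univ ({1, 2} : Finset (Fin 4)) = 1 ∧
    entropy (cycleCap 4) Finset.univ ({0, 1, 2} : Finset (Fin 4)) = 1 ∧
    entropy (cycleCap 4) Finset.univ ({0, 1} : Finset (Fin 4)) +
        entropy (cycleCap 4) Finset.univ ({0, 2} : Finset (Fin 4)) +
        entropy (cycleCap 4) Finset.univ ({1, 2} : Finset (Fin 4)) <
      entropy (cycleCap 4) Finset.univ ({0} : Finset (Fin 4)) +
        entropy (cycleCap 4) Finset.univ ({1} : Finset (Fin 4)) +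
        entropy (cycleCap 4) Finset.univ ({2} : Finset (Fin 4)) +
        entropy (cycleCap 4) Finset.univ ({0, 1, 2} : Finset (Fin 4)) := by
  
  have h0 := entropy_eq_one {0} 0 (by decide) (by decide)
  have h1 := entropy_eq_one {1} 1 (by decide) (by decide)
  have h2 := entropy_eq_one {2} 2 (by decide) (by decide)
  have h01 := entropy_eq_one {0, 1} 0 (by decide) (by decide)
  have h02 := entropy_eq_one {0, 2} 0 (by decide) (by decide)
  have h12 := entropy_eq_one {1, 2} 1 (by decide) (by decide)
  have h012 := entropy_eq_one {0, 1, 2} 0 (by decide) (by decide)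
  refine ⟨h0, h1, h2, h01, h02, h12, h012, ?_⟩
  rw [h0, h1, h2, h01, h02, h12, h012]
  norm_num
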